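/- Let q > 2 be a power of 2 and n = q^2 + 1. Then the largest coset leader of a q-cyclotomic coset modulo n among integers in [0, q^2] is (q^2 − q)/2, and for i = 2, 3, 4 the i-th largest coset leader is (q^2 − 3q + 6 − 2i)/2. -/
import Mathlib

private lemma dec_mod (n c r : ℕ) (hr : r < n) : (c * n + r) % n = r := by
  rw [Nat.add_comm, Nat.add_mul_mod_self_right, Nat.mod_eq_of_lt hr]

private lemma mul_pred_mod' (n x : ℕ) (hx : 0 < x) (hxn : x < n) :
    x * (n - 1) % n = n - x := by
  obtain ⟨s, rfl⟩ : ∃ s, x = s + 1 := ⟨x - 1, by omega⟩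
  obtain ⟨d, rfl⟩ : ∃ d, n = s + d + 2 := ⟨n - s - 2, by omega⟩
  have h : (s + 1) * ((s + d + 2) - 1) = s * (s + d + 2) + (d + 1) := by
    have h2 : (s + d + 2) - 1 = s + d + 1 := by omega
    rw [h2]; ring
  rw [h, dec_mod _ _ _ (by omega)]
  omega

private lemma pow4_mod' (q n : ℕ) (hq : 1 ≤ q) (hn : n = q ^ 2 + 1) :
    q ^ 4 % n = 1 := by
  have hq2 : 1 ≤ q ^ 2 := Nat.one_le_pow _ _ hq
  obtain ⟨Q, hQ⟩ : ∃ Q, q ^ 2 = Q + 1 := ⟨q ^ 2 - 1, by omega⟩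
  have e : q ^ 4 = Q * n + 1 := by
    have h1 : q ^ 4 = (q ^ 2) * (q ^ 2) := by ring
    rw [h1, hQ, hn, hQ]; ring
  rw [e, dec_mod _ _ _ (by omega)]

private lemma sq_mod' (q n : ℕ) (hq : 1 ≤ q) (hn : n = q ^ 2 + 1) :
    q ^ 2 % n = n - 1 := by
  rw [hn, Nat.mod_eq_of_lt (Nat.lt_succ_self _), Nat.add_sub_cancel]

private lemma mem_S_of (q n a c r : ℕ) (hq : 1 ≤ q) (hn : n = q ^ 2 + 1)
    (hc : a * q = c * n + r) (hrn : r < n) (h0r : 0 < r)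
    (h1 : a ≤ r) (h2 : 2 * a ≤ n) (h3 : a + r ≤ n) :
    ∀ j : ℕ, a ≤ a * q ^ j % n := by
  have hq2 : 1 ≤ q ^ 2 := Nat.one_le_pow _ _ hq
  have hn1 : 1 < n := by omega
  have han : a < n := lt_of_le_of_lt h1 hrn
  have hq2n : q ^ 2 % n = n - 1 := sq_mod' q n hq hn
  have h4 : q ^ 4 % n = 1 := pow4_mod' q n hq hn
  have hmod1 : a * q % n = r := by rw [hc, dec_mod _ _ _ hrn]
  intro j
  have hred : a * q ^ j % n = a * q ^ (j % 4) % n := by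
    conv_lhs => rw [← Nat.div_add_mod j 4, pow_add, pow_mul]
    have hone : (q ^ 4) ^ (j / 4) % n = 1 := by
      rw [Nat.pow_mod, h4, one_pow, Nat.mod_eq_of_lt hn1]
    calc a * ((q ^ 4) ^ (j / 4) * q ^ (j % 4)) % n
        = (a * q ^ (j % 4)) * ((q ^ 4) ^ (j / 4)) % n := by ring_nf
      _ = ((a * q ^ (j % 4)) % n) * ((q ^ 4) ^ (j / 4) % n) % n := by
          rw [← Nat.mul_mod]
      _ = a * q ^ (j % 4) % n := by
          rw [hone, mul_one, Nat.mod_mod_of_dvd _ dvd_rfl]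
  rw [hred]
  have hcases : j % 4 = 0 ∨ j % 4 = 1 ∨ j % 4 = 2 ∨ j % 4 = 3 := by omega
  rcases hcases with h | h | h | h <;> rw [h]
  · simpa [Nat.mod_eq_of_lt han] using le_refl a
  · rw [pow_one, hmod1]; exact h1
  · rcases Nat.eq_zero_or_pos a with rfl | ha0
    · simp
    · rw [Nat.mul_mod, Nat.mod_eq_of_lt han, hq2n, mul_pred_mod' n a ha0 han]
      omega
  · have e3 : a * q ^ 3 = a * q * q ^ 2 := by ring
    rw [e3, Nat.mul_mod, hmod1, hq2n, mul_pred_mod' n r h0r hrn]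
    omega

private lemma leader_cond' (q n a c r : ℕ) (hq : 1 ≤ q) (hn : n = q ^ 2 + 1)
    (hc : a * q = c * n + r) (hrn : r < n) (h0r : 0 < r)
    (hS : ∀ j : ℕ, a ≤ a * q ^ j % n) : a ≤ r ∧ a + r ≤ n := by
  have hq2 : 1 ≤ q ^ 2 := Nat.one_le_pow _ _ hq
  have hn1 : 1 < n := by omega
  have hq2n : q ^ 2 % n = n - 1 := sq_mod' q n hq hn
  have hmod1 : a * q % n = r := by rw [hc, dec_mod _ _ _ hrn]
  have h1 := hS 1
  rw [pow_one, hmod1] at h1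
  have h3 := hS 3
  have e3 : a * q ^ 3 = a * q * q ^ 2 := by ring
  rw [e3, Nat.mul_mod, hmod1, hq2n, mul_pred_mod' n r h0r hrn] at h3
  exact ⟨h1, by omega⟩

private lemma half_bound' (q n a : ℕ) (hq : 1 ≤ q) (hn : n = q ^ 2 + 1)
    (han : a < n) (h : a ≤ a * q ^ 2 % n) : 2 * a ≤ n := by
  rcases Nat.eq_zero_or_pos a with rfl | ha0
  · omega
  · have hq2 : 1 ≤ q ^ 2 := Nat.one_le_pow _ _ hq
    have hn1 : 1 < n := by omega
    have hq2n : q ^ 2 % n = n - 1 := sq_mod' q n hq hn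
    rw [Nat.mul_mod, Nat.mod_eq_of_lt han, hq2n, mul_pred_mod' n a ha0 han] at h
    omega

/-- For `q > 2` a power of 2 and `n = q² + 1`, the four largest `q`-cyclotomic
coset leaders modulo `n` are `δ₁ = (q²−q)/2` and `δᵢ = (q²−3q+6−2i)/2` for
`i = 2, 3, 4`. -/
theorem four_largest_coset_leaders_even_q (t : ℕ) (ht : 2 ≤ t)
    (q : ℕ) (hq : q = 2 ^ t) (n : ℕ) (hn : n = q ^ 2 + 1) :
    let S : Set ℕ := {a | a < n ∧ ∀ j : ℕ, a ≤ (a * q ^ j) % n}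
    let δ₁ := (q ^ 2 - q) / 2
    let δ₂ := (q ^ 2 - 3 * q + 2) / 2
    let δ₃ := (q ^ 2 - 3 * q) / 2
    let δ₄ := (q ^ 2 - 3 * q - 2) / 2
    δ₁ ∈ S ∧ (∀ a ∈ S, a ≤ δ₁) ∧
    δ₂ ∈ S ∧ (∀ a ∈ S, a < δ₁ → a ≤ δ₂) ∧
    δ₃ ∈ S ∧ (∀ a ∈ S, a < δ₂ → a ≤ δ₃) ∧
    δ₄ ∈ S ∧ (∀ a ∈ S, a < δ₃ → a ≤ δ₄) := by
  obtain ⟨v, hqv⟩ : ∃ v, q = 2 * v + 4 := by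
    obtain ⟨s, hs⟩ : ∃ s, t = s + 2 := ⟨t - 2, by omega⟩
    have h1 : 1 ≤ 2 ^ s := Nat.one_le_two_pow
    exact ⟨2 * (2 ^ s - 1), by rw [hq, hs, pow_add]; omega⟩
  have hq1 : 1 ≤ q := by omega
  have hn' : n = 4 * v ^ 2 + 16 * v + 17 := by rw [hn, hqv]; ring
  intro S δ₁ δ₂ δ₃ δ₄
  have e1 : δ₁ = 2 * v ^ 2 + 7 * v + 6 := by
    show (q ^ 2 - q) / 2 = _
    have h : q ^ 2 - q = 2 * (2 * v ^ 2 + 7 * v + 6) :=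
      Nat.sub_eq_of_eq_add (by rw [hqv]; ring)
    rw [h, Nat.mul_div_cancel_left _ (by norm_num)]
  have e34 : q ^ 2 - 3 * q = 4 * v ^ 2 + 10 * v + 4 :=
    Nat.sub_eq_of_eq_add (by rw [hqv]; ring)
  have e2 : δ₂ = 2 * v ^ 2 + 5 * v + 3 := by
    show (q ^ 2 - 3 * q + 2) / 2 = _
    rw [e34]
    have h : 4 * v ^ 2 + 10 * v + 4 + 2 = 2 * (2 * v ^ 2 + 5 * v + 3) := by ring
    rw [h, Nat.mul_div_cancel_left _ (by norm_num)]
  have e3 : δ₃ = 2 * v ^ 2 + 5 * v + 2 := by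
    show (q ^ 2 - 3 * q) / 2 = _
    rw [e34]
    have h : 4 * v ^ 2 + 10 * v + 4 = 2 * (2 * v ^ 2 + 5 * v + 2) := by ring
    rw [h, Nat.mul_div_cancel_left _ (by norm_num)]
  have e4 : δ₄ = 2 * v ^ 2 + 5 * v + 1 := by
    show (q ^ 2 - 3 * q - 2) / 2 = _
    rw [e34]
    have h : 4 * v ^ 2 + 10 * v + 4 - 2 = 2 * (2 * v ^ 2 + 5 * v + 1) :=
      Nat.sub_eq_of_eq_add (by ring)
    rw [h, Nat.mul_div_cancel_left _ (by norm_num)]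
  have hSdef : ∀ a : ℕ, a ∈ S ↔ a < n ∧ ∀ j : ℕ, a ≤ a * q ^ j % n := by
    intro a; rfl
  refine ⟨?_, ?_, ?_, ?_, ?_, ?_, ?_, ?_⟩
  · -- δ₁ ∈ S
    rw [hSdef, e1]
    constructor
    · omega
    · exact mem_S_of q n _ (v + 1) (2 * v ^ 2 + 7 * v + 7) hq1 hn
        (by rw [hqv, hn']; ring) (by omega) (by omega) (by omega) (by omega) (by omega)
  · -- maximality of δ₁
    intro a ha
    rw [hSdef] at ha
    obtain ⟨han, hS⟩ := ha
    rw [e1]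
    by_contra hcon
    push_neg at hcon
    have h2a : 2 * a ≤ n := half_bound' q n a hq1 hn han (hS 2)
    obtain ⟨k, rfl⟩ : ∃ k, a = 2 * v ^ 2 + 7 * v + 7 + k :=
      ⟨a - (2 * v ^ 2 + 7 * v + 7), by omega⟩
    have hkv : k ≤ v + 1 := by omega
    have hprod : k * (2 * v + 4) ≤ (v + 1) * (2 * v + 4) :=
      Nat.mul_le_mul_right _ hkv
    have hexp : (v + 1) * (2 * v + 4) = 2 * v ^ 2 + 6 * v + 4 := by ring
    obtain ⟨hA, hB⟩ := leader_cond' q n _ (v + 1)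
      (2 * v ^ 2 + 9 * v + 11 + k * (2 * v + 4)) hq1 hn
      (by rw [hqv, hn']; ring) (by omega) (by omega) hS
    omega
  · -- δ₂ ∈ S
    rw [hSdef, e2]
    constructor
    · omega
    · exact mem_S_of q n _ v (2 * v ^ 2 + 9 * v + 12) hq1 hn
        (by rw [hqv, hn']; ring) (by omega) (by omega) (by omega) (by omega) (by omega)
  · -- maximality of δ₂
    intro a ha halt
    rw [hSdef] at ha
    obtain ⟨han, hS⟩ := ha
    rw [e1] at halt
    rw [e2]
    by_contra hcon
    push_neg at hcon
    by_cases hcase : a ≤ 2 * v ^ 2 + 6 * v + 4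
    · -- case A
      obtain ⟨k, rfl⟩ : ∃ k, a = 2 * v ^ 2 + 5 * v + 4 + k :=
        ⟨a - (2 * v ^ 2 + 5 * v + 4), by omega⟩
      have hkv : k ≤ v := by omega
      have hprod : k * (2 * v + 4) ≤ v * (2 * v + 4) :=
        Nat.mul_le_mul_right _ hkv
      have hexp : v * (2 * v + 4) = 2 * v ^ 2 + 4 * v := by ring
      obtain ⟨hA, hB⟩ := leader_cond' q n _ v
        (2 * v ^ 2 + 11 * v + 16 + k * (2 * v + 4)) hq1 hn
        (by rw [hqv, hn']; ring) (by omega) (by omega) hS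
      omega
    · -- case B
      obtain ⟨k, rfl⟩ : ∃ k, a = 2 * v ^ 2 + 6 * v + 5 + k :=
        ⟨a - (2 * v ^ 2 + 6 * v + 5), by omega⟩
      have hkv : k ≤ v := by omega
      have hprod : k * (2 * v + 4) ≤ v * (2 * v + 4) :=
        Nat.mul_le_mul_right _ hkv
      have hexp : v * (2 * v + 4) = 2 * v ^ 2 + 4 * v := by ring
      obtain ⟨hA, hB⟩ := leader_cond' q n _ (v + 1)
        (v + 3 + k * (2 * v + 4)) hq1 hn
        (by rw [hqv, hn']; ring) (by omega) (by omega) hS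
      omega
  · -- δ₃ ∈ S
    rw [hSdef, e3]
    constructor
    · omega
    · exact mem_S_of q n _ v (2 * v ^ 2 + 7 * v + 8) hq1 hn
        (by rw [hqv, hn']; ring) (by omega) (by omega) (by omega) (by omega) (by omega)
  · -- maximality of δ₃
    intro a _ halt
    rw [e2] at halt
    rw [e3]
    omega
  · -- δ₄ ∈ S
    rw [hSdef, e4]
    constructor
    · omega
    · exact mem_S_of q n _ v (2 * v ^ 2 + 5 * v + 4) hq1 hn
        (by rw [hqv, hn']; ring) (by omega) (by omega) (by omega) (by omega) (by omega)
  · -- maximality of δ₄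
    intro a _ halt
    rw [e3] at halt
    rw [e4]
    omega
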